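/- (Score-function gradient identity for the Gaussian-smoothed loss.) Let σ > 0 and let L : ℝ → ℝ be measurable and bounded. Define the smoothed loss L_p(θ) = ∫ L(v) dN(θ, σ²)(v). Then L_p is differentiable at every θ ∈ ℝ and its derivative is given by L_p'(θ) = ∫ L(v)·(v − θ)/σ² dN(θ, σ²)(v). -/

import Mathlib

open MeasureTheory ProbabilityTheory
open scoped NNReal ENNReal

/-- Score-function gradient identity for the Gaussian-smoothed loss: for bounded measurable
`L`, the smoothed loss `L_p(θ) = ∫ L dN(θ, σ²)` is differentiable with
`L_p'(θ) = ∫ L(v)·(v − θ)/σ² dN(θ, σ²)(v)`. -/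
theorem smoothed_loss_score_gradient (σ : ℝ) (hσ : σ > 0) (L : ℝ → ℝ)
    (hL : Measurable L) (C : ℝ) (hbd : ∀ v : ℝ, |L v| ≤ C) (θ : ℝ) :
    HasDerivAt (fun θ : ℝ => ∫ v, L v ∂(gaussianReal θ ⟨σ ^ 2, sq_nonneg σ⟩))
      (∫ v, L v * (v - θ) / σ ^ 2 ∂(gaussianReal θ ⟨σ ^ 2, sq_nonneg σ⟩)) θ := by
  have hπ := Real.pi_pos
  set V : ℝ≥0 := ⟨σ ^ 2, sq_nonneg σ⟩ with hVdef
  have hσ2 : (0:ℝ) < σ ^ 2 := by positivity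
  have hVc : (V : ℝ) = σ ^ 2 := rfl
  have hV : V ≠ 0 := by
    intro h
    have h2 : (V : ℝ) = 0 := by rw [h]; simp
    rw [hVc] at h2; exact hσ2.ne' h2
  have hC : 0 ≤ C := le_trans (abs_nonneg _) (hbd 0)
  have hc : 0 < Real.sqrt (2 * Real.pi * (V:ℝ)) := Real.sqrt_pos.2 (by rw [hVc]; positivity)
  -- conversion of Gaussian integrals to Lebesgue integrals
  have key : ∀ (t : ℝ) (g : ℝ → ℝ),
      ∫ v, g v ∂(gaussianReal t V) = ∫ v, g v * gaussianPDFReal t V v := by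
    intro t g
    rw [gaussianReal_of_var_ne_zero t hV]
    have h1 : (gaussianPDF t V)
        = fun x => ((Real.toNNReal (gaussianPDFReal t V x) : ℝ≥0) : ℝ≥0∞) := rfl
    rw [h1, integral_withDensity_eq_integral_smul
      ((measurable_gaussianPDFReal t V).real_toNNReal)]
    refine integral_congr_ae (Filter.Eventually.of_forall fun v => ?_)
    simp only [NNReal.smul_def, Real.coe_toNNReal _ (gaussianPDFReal_nonneg _ _ _)]
    rw [smul_eq_mul]; ring
  -- derivative of the pdf in the mean parameter
  have hderiv : ∀ (v t : ℝ), HasDerivAt (fun s => gaussianPDFReal s V v)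
      ((Real.sqrt (2 * Real.pi * (V:ℝ)))⁻¹
        * (Real.exp (-(v - t) ^ 2 / (2 * (V:ℝ))) * ((v - t) / σ ^ 2))) t := by
    intro v t
    have h2 : HasDerivAt (fun s : ℝ => v - s) (-1) t := (hasDerivAt_id t).const_sub v
    have h3 := ((h2.pow 2).neg).div_const (2 * (V:ℝ))
    have h1 : HasDerivAt (fun s : ℝ => -(v - s) ^ 2 / (2 * (V:ℝ))) ((v - t) / σ ^ 2) t := by
      refine h3.congr_deriv ?_
      rw [hVc]
      field_simp
      ring
    have h4 := (h1.exp).const_mul ((Real.sqrt (2 * Real.pi * (V:ℝ)))⁻¹)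
    have hfun : (fun s => gaussianPDFReal s V v)
        = fun s => (Real.sqrt (2 * Real.pi * (V:ℝ)))⁻¹ * Real.exp (-(v - s) ^ 2 / (2 * (V:ℝ))) := by
      funext s; rw [gaussianPDFReal]
    rw [hfun]
    exact h4
  set F' : ℝ → ℝ → ℝ := fun t v => L v * ((Real.sqrt (2*Real.pi*(V:ℝ)))⁻¹
      * (Real.exp (-(v - t)^2/(2*(V:ℝ))) * ((v - t)/σ^2))) with hF'def
  set K : ℝ := C * (Real.sqrt (2*Real.pi*(V:ℝ)))⁻¹ / σ^2 * (2*σ*Real.exp (1/(4*σ^2))) with hKdef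
  set bound : ℝ → ℝ := fun v => K * Real.exp (-(1/(8*σ^2)) * (v-θ)^2) with hbdef
  -- auxiliary inequality: |x| e^{-x²/(4σ²)} ≤ 2σ
  have hA : ∀ x : ℝ, |x| * Real.exp (-x^2/(4*σ^2)) ≤ 2*σ := by
    intro x
    have he : 0 < Real.exp (-x^2/(4*σ^2)) := Real.exp_pos _
    have he1 : Real.exp (-x^2/(4*σ^2)) ≤ 1 := Real.exp_le_one_iff.2 (by rw [neg_div]; exact neg_nonpos.2 (by positivity))
    have hy : x^2/(4*σ^2) ≤ Real.exp (x^2/(4*σ^2)) := by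
      linarith [Real.add_one_le_exp (x^2/(4*σ^2))]
    have hee : Real.exp (-x^2/(4*σ^2)) * Real.exp (x^2/(4*σ^2)) = 1 := by
      rw [← Real.exp_add]; ring_nf; exact Real.exp_zero
    have h2 : x^2 * Real.exp (-x^2/(4*σ^2)) ≤ 4*σ^2 := by
      have h5 := mul_le_mul_of_nonneg_left hy he.le
      rw [hee] at h5
      calc x^2 * Real.exp (-x^2/(4*σ^2))
          = (4*σ^2) * (Real.exp (-x^2/(4*σ^2)) * (x^2/(4*σ^2))) := by field_simp
        _ ≤ (4*σ^2) * 1 := by gcongr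
        _ = 4*σ^2 := mul_one _
    have h3 : (|x| * Real.exp (-x^2/(4*σ^2)))^2 ≤ (2*σ)^2 := by
      have hsq : (|x| * Real.exp (-x^2/(4*σ^2)))^2
          = x^2 * Real.exp (-x^2/(4*σ^2)) * Real.exp (-x^2/(4*σ^2)) := by
        rw [mul_pow, sq_abs]; ring
      rw [hsq]
      calc x^2 * Real.exp (-x^2/(4*σ^2)) * Real.exp (-x^2/(4*σ^2))
          ≤ (4*σ^2) * 1 := by
            apply mul_le_mul h2 he1 he.le (by positivity)
        _ = (2*σ)^2 := by ring
    have h4 : 0 ≤ |x| * Real.exp (-x^2/(4*σ^2)) := by positivity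
    nlinarith [h3, h4, hσ]
  -- pointwise bound on the derivative for t in a unit ball around θ
  have hboundpt : ∀ v : ℝ, ∀ t ∈ Metric.ball θ 1, ‖F' t v‖ ≤ bound v := by
    intro v t ht
    rw [Metric.mem_ball, Real.dist_eq] at ht
    have hB : (v-θ)^2/2 - 1 ≤ (v-t)^2 := by
      have h1 := (abs_lt.1 ht).1
      have h2 := (abs_lt.1 ht).2
      nlinarith [sq_nonneg ((v-θ) - 2*(t-θ))]
    have he2 : Real.exp (-(v-t)^2/(2*(V:ℝ)))
        = Real.exp (-(v-t)^2/(4*σ^2)) * Real.exp (-(v-t)^2/(4*σ^2)) := by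
      rw [← Real.exp_add, hVc]; congr 1; field_simp; ring
    have hmono : Real.exp (-(v-t)^2/(4*σ^2))
        ≤ Real.exp (1/(4*σ^2)) * Real.exp (-(1/(8*σ^2)) * (v-θ)^2) := by
      rw [← Real.exp_add]
      apply Real.exp_le_exp.2
      have h4σ : (0:ℝ) < 4*σ^2 := by positivity
      have := (div_le_div_iff_of_pos_right h4σ).2 (by linarith : -(v-t)^2 ≤ 1 - (v-θ)^2/2)
      calc -(v-t)^2/(4*σ^2) ≤ (1 - (v-θ)^2/2)/(4*σ^2) := this
        _ = 1/(4*σ^2) + -(1/(8*σ^2)) * (v-θ)^2 := by field_simp; ring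
    have habs : ‖F' t v‖ = |L v| * ((Real.sqrt (2*Real.pi*(V:ℝ)))⁻¹
        * (Real.exp (-(v-t)^2/(2*(V:ℝ))) * (|v - t|/σ^2))) := by
      rw [Real.norm_eq_abs, hF'def]
      simp only [abs_mul, abs_inv, abs_div]
      rw [abs_of_pos hc, abs_of_pos (Real.exp_pos _), abs_of_pos hσ2]
    have hmain : Real.exp (-(v-t)^2/(2*(V:ℝ))) * (|v - t|/σ^2)
        ≤ (2*σ*Real.exp (1/(4*σ^2))/σ^2) * Real.exp (-(1/(8*σ^2)) * (v-θ)^2) := by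
      calc Real.exp (-(v-t)^2/(2*(V:ℝ))) * (|v - t|/σ^2)
          = (|v-t| * Real.exp (-(v-t)^2/(4*σ^2))) * Real.exp (-(v-t)^2/(4*σ^2)) / σ^2 := by
            rw [he2]; ring
        _ ≤ (2*σ) * Real.exp (-(v-t)^2/(4*σ^2)) / σ^2 := by
            apply div_le_div_of_nonneg_right ?_ hσ2.le |>.trans_eq rfl
            · exact mul_le_mul_of_nonneg_right (hA (v-t)) (Real.exp_pos _).le
        _ ≤ (2*σ) * (Real.exp (1/(4*σ^2)) * Real.exp (-(1/(8*σ^2)) * (v-θ)^2)) / σ^2 := by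
            gcongr
        _ = (2*σ*Real.exp (1/(4*σ^2))/σ^2) * Real.exp (-(1/(8*σ^2)) * (v-θ)^2) := by ring
    calc ‖F' t v‖ = |L v| * ((Real.sqrt (2*Real.pi*(V:ℝ)))⁻¹
          * (Real.exp (-(v-t)^2/(2*(V:ℝ))) * (|v - t|/σ^2))) := habs
      _ ≤ C * ((Real.sqrt (2*Real.pi*(V:ℝ)))⁻¹
          * ((2*σ*Real.exp (1/(4*σ^2))/σ^2) * Real.exp (-(1/(8*σ^2)) * (v-θ)^2))) := by
        have h0 : 0 ≤ (Real.sqrt (2*Real.pi*(V:ℝ)))⁻¹ := by positivity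
        exact mul_le_mul (hbd v) (by gcongr) (by positivity) hC
      _ = bound v := by rw [hbdef, hKdef]; ring
  -- measurability and integrability
  have hFmeas : ∀ t : ℝ, AEStronglyMeasurable (fun v => L v * gaussianPDFReal t V v) volume :=
    fun t => (hL.mul (measurable_gaussianPDFReal t V)).aestronglyMeasurable
  have hFint : Integrable (fun v => L v * gaussianPDFReal θ V v) := by
    refine ((integrable_gaussianPDFReal θ V).const_mul C).mono' (hFmeas θ) ?_
    refine Filter.Eventually.of_forall fun v => ?_
    rw [Real.norm_eq_abs, abs_mul, abs_of_nonneg (gaussianPDFReal_nonneg _ _ _)]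
    exact mul_le_mul_of_nonneg_right (hbd v) (gaussianPDFReal_nonneg _ _ _)
  have hF'meas : AEStronglyMeasurable (F' θ) volume := by
    apply Measurable.aestronglyMeasurable
    rw [hF'def]
    fun_prop
  have hbound_int : Integrable bound := by
    have h1 : Integrable (fun v : ℝ => Real.exp (-(1/(8*σ^2)) * v^2)) :=
      integrable_exp_neg_mul_sq (by positivity)
    exact (h1.comp_sub_right θ).const_mul K
  have hdiff : ∀ᵐ v : ℝ, ∀ t ∈ Metric.ball θ 1,
      HasDerivAt (fun t => L v * gaussianPDFReal t V v) (F' t v) t :=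
    Filter.Eventually.of_forall fun v t _ => (hderiv v t).const_mul (L v)
  have H := hasDerivAt_integral_of_dominated_loc_of_deriv_le (μ := volume)
    (F := fun t v => L v * gaussianPDFReal t V v) (F' := F') (x₀ := θ) (bound := bound)
    (Metric.ball_mem_nhds θ one_pos) (Filter.Eventually.of_forall hFmeas) hFint hF'meas
    (Filter.Eventually.of_forall hboundpt) hbound_int hdiff
  have hg1 : (fun t : ℝ => ∫ v, L v ∂(gaussianReal t V))
      = fun t => ∫ v, L v * gaussianPDFReal t V v := funext fun t => key t L
  have hg2 : (∫ v, L v * (v - θ) / σ ^ 2 ∂(gaussianReal θ V)) = ∫ v, F' θ v := by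
    rw [key θ (fun v => L v * (v - θ) / σ ^ 2)]
    refine integral_congr_ae (Filter.Eventually.of_forall fun v => ?_)
    rw [hF'def]
    simp only [gaussianPDFReal]
    ring
  rw [hg1, hg2]
  exact H.2
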